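/- Consequence: any Hermitian-preserving linear map Φ that contracts a quantum Fisher metric K_f at every interior point (where defined) is trace non-increasing on positive definite matrices: Tr[Φ(ρ)] ≤ Tr[ρ] for all ρ > 0 with Φ(ρ) > 0. -/

import Mathlib

open Matrix Finset
open scoped ComplexOrder

/-- Quantum Fisher quadratic form `K_{f,ρ}(A,A)` in the eigenbasis of `ρ`. -/
noncomputable def Kf (f : ℝ → ℝ) {d : ℕ} (ρ A : Matrix (Fin d) (Fin d) ℂ) : ℝ :=
  if h : ρ.IsHermitian then
    ∑ i, ∑ j,
      ‖((h.eigenvectorUnitary : Matrix (Fin d) (Fin d) ℂ)ᴴ * A *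
        (h.eigenvectorUnitary : Matrix (Fin d) (Fin d) ℂ)) i j‖ ^ 2 /
        (h.eigenvalues j * f (h.eigenvalues i / h.eigenvalues j))
  else 0

lemma trace_re_eq_sum_eigenvalues {d : ℕ} {ρ : Matrix (Fin d) (Fin d) ℂ}
    (h : ρ.IsHermitian) : (Matrix.trace ρ).re = ∑ i, h.eigenvalues i := by
  have := h.spectral_theorem
  have htr : Matrix.trace ρ =
      Matrix.trace (Matrix.diagonal ((↑) ∘ h.eigenvalues : Fin d → ℂ)) := by
    conv_lhs => rw [this, Unitary.conjStarAlgAut_apply]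
    rw [Matrix.trace_mul_cycle]
    congr 1
    rw [(Matrix.mem_unitaryGroup_iff').mp (h.eigenvectorUnitary).2, one_mul]
    rfl
  rw [htr, Matrix.trace_diagonal]
  push_cast
  simp

lemma Kf_self {d : ℕ} (f : ℝ → ℝ) (hf1 : f 1 = 1) {ρ : Matrix (Fin d) (Fin d) ℂ}
    (hρ : ρ.PosDef) : Kf f ρ ρ = (Matrix.trace ρ).re := by
  have h : ρ.IsHermitian := hρ.1
  rw [Kf, dif_pos h, trace_re_eq_sum_eigenvalues h]
  have hdiag : (h.eigenvectorUnitary : Matrix (Fin d) (Fin d) ℂ)ᴴ * ρ *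
      (h.eigenvectorUnitary : Matrix (Fin d) (Fin d) ℂ)
      = Matrix.diagonal ((↑) ∘ h.eigenvalues : Fin d → ℂ) := by
    rw [← Matrix.star_eq_conjTranspose]
    have := h.conjStarAlgAut_star_eigenvectorUnitary
    rw [Unitary.conjStarAlgAut_apply, Unitary.coe_star, star_star] at this
    exact this
  rw [hdiag]
  refine Finset.sum_congr rfl fun i _ => ?_
  rw [Finset.sum_eq_single i]
  · have hpos : 0 < h.eigenvalues i := hρ.eigenvalues_pos i
    rw [Matrix.diagonal_apply_eq, div_self hpos.ne', hf1, mul_one]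
    simp only [Function.comp_apply, Complex.norm_real, Real.norm_eq_abs, sq_abs]
    rw [sq, mul_div_assoc, div_self hpos.ne', mul_one]
  · intro j _ hj
    rw [Matrix.diagonal_apply_ne' _ hj]
    simp
  · intro hi
    exact absurd (Finset.mem_univ i) hi

/-- A Hermitian-preserving linear map contracting the quantum Fisher metric at
every interior point is trace non-increasing on positive definite matrices. -/
theorem fisher_contraction_implies_trace_nonincreasing {d : ℕ} (f : ℝ → ℝ)
    (hfpos : ∀ x > (0 : ℝ), 0 < f x) (hf1 : f 1 = 1)
    (hfsymm : ∀ x > (0 : ℝ), x * f (1 / x) = f x)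
    (Φ : Matrix (Fin d) (Fin d) ℂ →ₗ[ℂ] Matrix (Fin d) (Fin d) ℂ)
    (hherm : ∀ A : Matrix (Fin d) (Fin d) ℂ, Φ Aᴴ = (Φ A)ᴴ)
    (hcontr : ∀ (ρ A : Matrix (Fin d) (Fin d) ℂ), ρ.PosDef → (Φ ρ).PosDef →
      A.IsHermitian → Kf f (Φ ρ) (Φ A) ≤ Kf f ρ A) :
    ∀ ρ : Matrix (Fin d) (Fin d) ℂ, ρ.PosDef → (Φ ρ).PosDef →
      (Matrix.trace (Φ ρ)).re ≤ (Matrix.trace ρ).re := by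
  intro ρ hρ hΦρ
  have := hcontr ρ ρ hρ hΦρ hρ.1
  rwa [Kf_self f hf1 hρ, Kf_self f hf1 hΦρ] at this
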